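/- Let α, β > 0 and 0 < μ < β. Then for every n ∈ ℕ and every x ∈ [0,1], ∫_0^1 R_n^{α,β}(xz) · z^{α−1}(1−z)^{μ−1}/B(α,μ) dz = (ζ_n^{α+μ, β−μ}/ζ_n^{α,β}) R_n^{α+μ, β−μ}(x). -/

import Mathlib

open MeasureTheory Finset

noncomputable section

/-- Rising factorial `(a)_(n) = a (a+1) ⋯ (a+n−1)`. -/
def rf (a : ℝ) : ℕ → ℝ
  | 0 => 1
  | n + 1 => rf a n * (a + n)

/-- Falling factorial `N_[n] = N (N−1) ⋯ (N−n+1)` of a natural number, as a real. -/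
def ff (N n : ℕ) : ℝ := (N.descFactorial n : ℝ)

/-- Triangular array `a^θ_{n,m}` (meaningful for `0 ≤ m ≤ n`). -/
def acoef (θ : ℝ) (n m : ℕ) : ℝ :=
  if n = 0 then 1
  else (θ + 2 * n - 1) * (-1 : ℝ) ^ (n - m) * rf (θ + m) (n - 1) /
    ((m.factorial : ℝ) * ((n - m).factorial : ℝ))

/-- The simplex `Δ_{d−1} = {x ∈ [0,1]^d : x₁ + ⋯ + x_d = 1}`. -/
def simplex (d : ℕ) : Set (Fin d → ℝ) :=
  {x | (∀ i, 0 ≤ x i ∧ x i ≤ 1) ∧ ∑ i, x i = 1}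

/-- `ξ^α_m(x,y)`. -/
def xiK {d : ℕ} (α : Fin d → ℝ) (m : ℕ) (x y : Fin d → ℝ) : ℝ :=
  ∑ l ∈ Finset.Nat.antidiagonalTuple d m,
    ((m.factorial : ℝ) / ∏ i, ((l i).factorial : ℝ)) *
      (rf (∑ i, α i) m / ∏ i, rf (α i) (l i)) * ∏ i, (x i * y i) ^ l i

/-- Jacobi polynomial kernel `Q^α_n(x,y)`. -/
def Qker {d : ℕ} (α : Fin d → ℝ) (n : ℕ) (x y : Fin d → ℝ) : ℝ :=
  ∑ m ∈ Finset.range (n + 1), acoef (∑ i, α i) n m * xiK α m x y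

/-- Dirichlet–multinomial pmf `DM_α(l; m)`. -/
def DM {d : ℕ} (α : Fin d → ℝ) (l : Fin d → ℕ) (m : ℕ) : ℝ :=
  ((m.factorial : ℝ) / ∏ i, ((l i).factorial : ℝ)) *
    (∏ i, rf (α i) (l i)) / rf (∑ i, α i) m

/-- `ξ^{H,α}_m(r,s)`. -/
def xiH {d : ℕ} (α : Fin d → ℝ) (m : ℕ) (r s : Fin d → ℕ) : ℝ :=
  ∑ l ∈ Finset.Nat.antidiagonalTuple d m,
    DM (fun i => α i + r i) l m * DM (fun i => α i + s i) l m / DM α l m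

/-- Hahn polynomial kernel `H^α_n(r,s)` for `|r| = |s| = N`. -/
def Hker {d : ℕ} (α : Fin d → ℝ) (N n : ℕ) (r s : Fin d → ℕ) : ℝ :=
  (rf ((∑ i, α i) + N) n / ff N n) *
    ∑ m ∈ Finset.range (n + 1), acoef (∑ i, α i) n m * xiH α m r s

/-- `χ^{H,α}_m(r,s)`. -/
def chiH {d : ℕ} (α : Fin d → ℝ) (N m : ℕ) (r s : Fin d → ℕ) : ℝ :=
  ∑ l ∈ Finset.Nat.antidiagonalTuple d m,
    (1 / DM α l m) *
      (((m.factorial : ℝ) / ∏ i, ((l i).factorial : ℝ)) * (∏ i, ff (r i) (l i)) / ff N m) *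
      (((m.factorial : ℝ) / ∏ i, ((l i).factorial : ℝ)) * (∏ i, ff (s i) (l i)) / ff N m)

/-- Normalized Jacobi polynomial `R_n^{a,b}` on `[0,1]`. -/
def Rpoly (a b : ℝ) (n : ℕ) (x : ℝ) : ℝ :=
  ∑ k ∈ Finset.range (n + 1),
    (-1 : ℝ) ^ k * (n.choose k : ℝ) * (rf ((n : ℝ) + (a + b) - 1) k / rf b k) * (1 - x) ^ k

/-- `ζ_n^{a,b}`. -/
def zeta (a b : ℝ) (n : ℕ) : ℝ :=
  if n = 0 then 1
  else ((a + b) + 2 * n - 1) * rf (a + b) (n - 1) * rf b n / ((n.factorial : ℝ) * rf a n)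

/-- Hahn polynomial `h_n^{a,b}(r; N)`. -/
def hahnPoly (a b : ℝ) (N n r : ℕ) : ℝ :=
  ∑ k ∈ Finset.range (n + 1),
    (-1 : ℝ) ^ k * (n.choose k : ℝ) * rf ((n : ℝ) + (a + b) - 1) k * ff r k /
      (rf a k * ff N k)

/-- `u^{a,b}_{N,n}`. -/
def uCoef (a b : ℝ) (N n : ℕ) : ℝ :=
  if n = 0 then 1
  else (N.choose n : ℝ) * ((a + b) + 2 * n - 1) * rf (a + b) (n - 1) * rf a n /
    (rf ((a + b) + N) n * rf b n)

/-- Beta function `B(a,b) = Γ(a)Γ(b)/Γ(a+b)`. -/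
def BetaFn (a b : ℝ) : ℝ := Real.Gamma a * Real.Gamma b / Real.Gamma (a + b)

/-- Condition (G) on the parameter vector `α`. -/
def CondG {d : ℕ} (α : Fin d → ℝ) : Prop :=
  ∀ j : Fin d, 0 < (j : ℕ) →
    (α j ≤ ∑ i ∈ Finset.univ.filter fun i : Fin d => (i : ℕ) < (j : ℕ), α i) ∧
      (1 / 2 ≤ α j ∨ 2 ≤ ∑ i ∈ Finset.univ.filter fun i : Fin d => (i : ℕ) ≤ (j : ℕ), α i)

/-- Density of the Dirichlet distribution in the coordinates `(u₁, …, u_{d−1})`. -/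
def dirichletDensity (k : ℕ) (α : Fin (k + 1) → ℝ) (u : Fin k → ℝ) : ℝ :=
  if (∀ i, 0 < u i ∧ u i < 1) ∧ ∑ i, u i < 1 then
    (Real.Gamma (∑ i, α i) / ∏ i, Real.Gamma (α i)) *
      (∏ i : Fin k, u i ^ (α (Fin.castSucc i) - 1)) * (1 - ∑ i, u i) ^ (α (Fin.last k) - 1)
  else 0

/-- The Dirichlet probability measure `D_α` on `Δ_{d−1} ⊆ ℝ^d`, `d = k + 1`. -/
def dirichlet (k : ℕ) (α : Fin (k + 1) → ℝ) : Measure (Fin (k + 1) → ℝ) :=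
  ((volume : Measure (Fin k → ℝ)).withDensity fun u =>
      ENNReal.ofReal (dirichletDensity k α u)).map fun u => Fin.snoc u (1 - ∑ i, u i)

@[simp] lemma rf_zero (a : ℝ) : rf a 0 = 1 := rfl
lemma rf_succ (a : ℝ) (n : ℕ) : rf a (n+1) = rf a n * (a + n) := rfl
@[simp] lemma rf_one (a : ℝ) : rf a 1 = a := by simp [rf_succ]

lemma rf_pos {a : ℝ} (ha : 0 < a) (n : ℕ) : 0 < rf a n := by
  induction n with
  | zero => norm_num
  | succ n ih => exact mul_pos ih (by positivity)

lemma rf_ne_zero {a : ℝ} (ha : 0 < a) (n : ℕ) : rf a n ≠ 0 := (rf_pos ha n).ne'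

lemma rf_add (a : ℝ) (m n : ℕ) : rf a (m + n) = rf a m * rf (a + m) n := by
  induction n with
  | zero => simp
  | succ n ih =>
    rw [← Nat.add_assoc, rf_succ, ih, rf_succ, mul_assoc]
    push_cast; ring_nf

lemma rf_succ_left (a : ℝ) (n : ℕ) : rf a (n + 1) = a * rf (a + 1) n := by
  have := rf_add a 1 n; simpa [Nat.add_comm] using this

lemma rf_reflect (c : ℝ) (m : ℕ) : rf (1 - c - m) m = (-1 : ℝ) ^ m * rf c m := by
  induction m generalizing c with
  | zero => simp
  | succ m ih =>
    rw [rf_succ_left, rf_succ]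
    have h1 : (1 : ℝ) - c - (m + 1 : ℕ) + 1 = 1 - c - m := by push_cast; ring
    have h2 : (1 : ℝ) - c - (m + 1 : ℕ) = -(c + m) := by push_cast; ring
    rw [h1, h2, ih]
    ring

lemma chu : ∀ (m : ℕ) (c d : ℝ), 0 < d →
    ∑ i ∈ Finset.range (m+1), (-1:ℝ)^i * ((m.choose i : ℕ) : ℝ) * rf c i / rf d i
      = rf (d - c) m / rf d m := by
  intro m
  induction m with
  | zero => intro c d hd; simp
  | succ m ih =>
    intro c d hd
    have hd' : (0:ℝ) < d + 1 := by linarith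
    have hdm : d + (m:ℝ) ≠ 0 := by positivity
    have hrd := rf_ne_zero hd
    have hrd1 := rf_ne_zero hd'
    have key : ∑ i ∈ Finset.range (m+1+1), (-1:ℝ)^i * ((m+1).choose i : ℝ) * rf c i / rf d i
        = (∑ i ∈ Finset.range (m+1), (-1:ℝ)^(i+1) * (m.choose i : ℝ) * rf c (i+1) / rf d (i+1))
          + (∑ i ∈ Finset.range (m+1), (-1:ℝ)^(i+1) * (m.choose (i+1) : ℝ) * rf c (i+1) / rf d (i+1)) + 1 := by
      rw [Finset.sum_range_succ' _ (m+1)]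
      simp only [Nat.choose_succ_succ]
      push_cast
      rw [← Finset.sum_add_distrib]
      congr 1
      · apply Finset.sum_congr rfl
        intro i _
        ring
      · simp
    have h2 : (∑ i ∈ Finset.range (m+1), (-1:ℝ)^(i+1) * (m.choose (i+1) : ℝ) * rf c (i+1) / rf d (i+1)) + 1
        = rf (d - c) m / rf d m := by
      have e1 : ∑ i ∈ Finset.range (m+1+1), ((-1:ℝ)^i * ((m.choose i : ℕ):ℝ) * rf c i / rf d i)
          = rf (d - c) m / rf d m := by
        rw [Finset.sum_range_succ]
        simp [ih c d hd]
      rw [← e1, Finset.sum_range_succ' (fun i => (-1:ℝ)^i * ((m.choose i : ℕ):ℝ) * rf c i / rf d i) (m+1)]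
      simp
    have h1 : (∑ i ∈ Finset.range (m+1), (-1:ℝ)^(i+1) * (m.choose i : ℝ) * rf c (i+1) / rf d (i+1))
        = -(c/d) * (rf (d - c) m / rf (d+1) m) := by
      have : ∀ i ∈ Finset.range (m+1), (-1:ℝ)^(i+1) * (m.choose i : ℝ) * rf c (i+1) / rf d (i+1)
          = -(c/d) * ((-1:ℝ)^i * (m.choose i : ℝ) * rf (c+1) i / rf (d+1) i) := by
        intro i _
        rw [rf_succ_left c, rf_succ_left d]
        have h := rf_ne_zero hd' i
        field_simp
        ring
      rw [Finset.sum_congr rfl this, ← Finset.mul_sum, ih (c+1) (d+1) hd']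
      rw [show d + 1 - (c+1) = d - c by ring]
    rw [key, add_assoc, h2, h1]
    have hrel : d * rf (d+1) m = rf d m * (d + m) := by
      rw [← rf_succ_left, rf_succ]
    have hR : rf d m ≠ 0 := hrd m
    have e : -(c/d) * (rf (d - c) m / rf (d+1) m) = -(c * rf (d - c) m) / (rf d m * (d + m)) := by
      rw [← hrel]
      field_simp
    rw [rf_succ, rf_succ, e]
    field_simp
    ring

lemma keyS (θ b : ℝ) (hb : 0 < b) (n j : ℕ) (hj : j ≤ n) :
    ∑ k ∈ Finset.Icc j n,
        (-1:ℝ)^k * (n.choose k : ℝ) * (k.choose j : ℝ) * rf ((n:ℝ)+θ-1) k / rf b k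
      = (-1:ℝ)^n * (n.choose j : ℝ) * rf ((n:ℝ)+θ-1) j * rf (θ - b + j) (n-j) / rf b n := by
  set c0 : ℝ := (n:ℝ) + θ - 1 with hc0
  have hbj : (0:ℝ) < b + j := by positivity
  rw [← Finset.Ico_add_one_right_eq_Icc, Finset.sum_Ico_eq_sum_range]
  have hrw : ∀ i ∈ Finset.range (n + 1 - j),
      (-1:ℝ)^(j+i) * (n.choose (j+i) : ℝ) * ((j+i).choose j : ℝ) * rf c0 (j+i) / rf b (j+i)
        = ((-1:ℝ)^j * (n.choose j : ℝ) * rf c0 j / rf b j)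
          * ((-1:ℝ)^i * ((n-j).choose i : ℝ) * rf (c0 + j) i / rf (b + j) i) := by
    intro i hi
    have hile : j + i ≤ n := by
      simp only [Finset.mem_range] at hi; omega
    have hch : (n.choose (j+i) : ℝ) * ((j+i).choose j : ℝ)
        = (n.choose j : ℝ) * ((n-j).choose i : ℝ) := by
      rw [← Nat.cast_mul, ← Nat.cast_mul, Nat.choose_mul (Nat.le_add_right j i)]
      simp
    rw [rf_add c0 j i, rf_add b j i, pow_add]
    have h1 : rf b j ≠ 0 := rf_ne_zero hb j
    have h2 : rf (b + j) i ≠ 0 := rf_ne_zero hbj i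
    field_simp
    linear_combination (rf c0 j * rf (c0 + (j:ℝ)) i) * hch
  rw [Finset.sum_congr rfl hrw, ← Finset.mul_sum]
  have hnj : n + 1 - j = (n - j) + 1 := by omega
  rw [hnj, chu (n - j) (c0 + j) (b + j) hbj]
  have hrefl : rf (b + j - (c0 + j)) (n - j) = (-1:ℝ)^(n-j) * rf (θ - b + j) (n - j) := by
    have : b + (j:ℝ) - (c0 + j) = 1 - (θ - b + (j:ℝ)) - ((n - j : ℕ) : ℝ) := by
      rw [hc0]
      push_cast [Nat.cast_sub hj]
      ring
    rw [this, rf_reflect]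
  rw [hrefl]
  have hsplit : rf b n = rf b j * rf (b + j) (n - j) := by
    have := rf_add b j (n - j)
    rwa [Nat.add_sub_cancel' hj] at this
  have hsign : (-1:ℝ)^j * (-1:ℝ)^(n-j) = (-1:ℝ)^n := by
    rw [← pow_add, Nat.add_sub_cancel' hj]
  have h1 : rf b j ≠ 0 := rf_ne_zero hb j
  have h2 : rf (b + j) (n - j) ≠ 0 := rf_ne_zero hbj (n - j)
  rw [hsplit]
  field_simp
  linear_combination ((n.choose j : ℝ) * rf c0 j * rf (θ - b + (j:ℝ)) (n - j)) * hsign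


lemma betaFn_pos {p q : ℝ} (hp : 0 < p) (hq : 0 < q) : 0 < BetaFn p q := by
  unfold BetaFn
  have := Real.Gamma_pos_of_pos hp
  have := Real.Gamma_pos_of_pos hq
  have := Real.Gamma_pos_of_pos (by linarith : 0 < p + q)
  positivity

lemma complex_eq_real_on (p q : ℝ) :
    ∀ z ∈ Set.Ioc (0:ℝ) 1,
      ((z:ℂ) ^ ((p:ℂ)-1) * (1-(z:ℂ)) ^ ((q:ℂ)-1)) = ((z ^ (p-1) * (1-z) ^ (q-1) : ℝ) : ℂ) := by
  intro z hz
  obtain ⟨h0, h1⟩ := hz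
  have hz0 : (0:ℝ) ≤ z := le_of_lt h0
  have hz1 : (0:ℝ) ≤ 1 - z := by linarith
  rw [Complex.ofReal_mul, Complex.ofReal_cpow hz0, Complex.ofReal_cpow hz1]
  push_cast
  norm_num

lemma betaIntegrableOn (p q : ℝ) (hp : 0 < p) (hq : 0 < q) :
    IntegrableOn (fun z : ℝ => z ^ (p-1) * (1-z) ^ (q-1)) (Set.Ioc (0:ℝ) 1) := by
  have hc := Complex.betaIntegral_convergent (u := (p:ℂ)) (v := (q:ℂ))
    (by simpa using hp) (by simpa using hq)
  have hIoc : IntegrableOn (fun x : ℝ => (x:ℂ) ^ ((p:ℂ)-1) * (1-(x:ℂ)) ^ ((q:ℂ)-1))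
      (Set.Ioc (0:ℝ) 1) := by
    rw [intervalIntegrable_iff_integrableOn_Ioc_of_le (by norm_num : (0:ℝ) ≤ 1)] at hc
    exact hc
  have hIoc2 : IntegrableOn (fun x : ℝ => ((x ^ (p-1) * (1-x) ^ (q-1) : ℝ) : ℂ))
      (Set.Ioc (0:ℝ) 1) :=
    hIoc.congr_fun (complex_eq_real_on p q) measurableSet_Ioc
  have := hIoc2.re
  simpa [IntegrableOn] using this

lemma betaEval (p q : ℝ) (hp : 0 < p) (hq : 0 < q) :
    ∫ z in Set.Ioc (0:ℝ) 1, z ^ (p-1) * (1-z) ^ (q-1) = BetaFn p q := by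
  have hG := Complex.Gamma_mul_Gamma_eq_betaIntegral (s := (p:ℂ)) (t := (q:ℂ))
    (by simpa using hp) (by simpa using hq)
  have hb : Complex.betaIntegral (p:ℂ) (q:ℂ)
      = ((∫ z in Set.Ioc (0:ℝ) 1, z ^ (p-1) * (1-z) ^ (q-1) : ℝ) : ℂ) := by
    rw [Complex.betaIntegral, intervalIntegral.integral_of_le (by norm_num : (0:ℝ) ≤ 1)]
    rw [setIntegral_congr_fun measurableSet_Ioc (complex_eq_real_on p q)]
    exact integral_ofReal
  rw [hb, Complex.Gamma_ofReal, Complex.Gamma_ofReal, ← Complex.ofReal_add,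
    Complex.Gamma_ofReal, ← Complex.ofReal_mul, ← Complex.ofReal_mul] at hG
  have hreal : Real.Gamma p * Real.Gamma q
      = Real.Gamma (p+q) * ∫ z in Set.Ioc (0:ℝ) 1, z ^ (p-1) * (1-z) ^ (q-1) := by
    exact_mod_cast hG
  have hGpq : Real.Gamma (p+q) ≠ 0 := (Real.Gamma_pos_of_pos (by linarith)).ne'
  unfold BetaFn
  field_simp
  linarith [hreal]


lemma zeta_ratio (a b μ : ℝ) (ha : 0 < a) (hb : 0 < b) (hμ0 : 0 < μ) (hμb : μ < b) (n : ℕ) :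
    zeta (a+μ) (b-μ) n / zeta a b n = rf (b-μ) n * rf a n / (rf (a+μ) n * rf b n) := by
  cases n with
  | zero => simp [zeta]
  | succ m =>
    unfold zeta
    simp only [Nat.succ_ne_zero, if_false, Nat.add_sub_cancel]
    rw [show a + μ + (b - μ) = a + b by ring]
    have h1 : (0:ℝ) < a + b := by linarith
    have h2 : rf (a+b) m ≠ 0 := rf_ne_zero h1 m
    have h3 : (0:ℝ) < a + b + 2*((m+1:ℕ):ℝ) - 1 := by
      push_cast
      have : (0:ℝ) ≤ (m:ℝ) := Nat.cast_nonneg m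
      linarith
    have h4 : ((m+1).factorial : ℝ) ≠ 0 := by positivity
    have h5 : rf a (m+1) ≠ 0 := rf_ne_zero ha _
    have h6 : rf b (m+1) ≠ 0 := rf_ne_zero hb _
    have h7 : rf (a+μ) (m+1) ≠ 0 := rf_ne_zero (by linarith) _
    have h8 : rf (b-μ) (m+1) ≠ 0 := rf_ne_zero (by linarith) _
    have hC : (a + b + 2*((m+1:ℕ):ℝ) - 1) * rf (a+b) m ≠ 0 :=
      (mul_pos h3 (rf_pos h1 m)).ne'
    have key : ∀ (C F A B A' B' : ℝ), C ≠ 0 → F ≠ 0 → A ≠ 0 → B ≠ 0 → A' ≠ 0 → B' ≠ 0 →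
        (C * B' / (F * A')) / (C * B / (F * A)) = B' * A / (A' * B) := by
      intros C F A B A' B' hC hF hA hB hA' hB'
      field_simp
    exact key _ _ _ _ _ _ hC h4 h5 h6 h7 h8

lemma sum_swap_tri (n : ℕ) (F : ℕ → ℕ → ℝ) :
    ∑ k ∈ Finset.range (n+1), ∑ j ∈ Finset.range (k+1), F k j
      = ∑ j ∈ Finset.range (n+1), ∑ k ∈ Finset.Icc j n, F k j := by
  have h := Finset.sum_Ico_Ico_comm 0 (n+1) (fun j k => F k j)
  simp only [← Finset.range_eq_Ico] at h
  rw [← h]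
  apply Finset.sum_congr rfl
  intro j _
  rw [Finset.Ico_add_one_right_eq_Icc]

lemma Gamma_rf {a : ℝ} (ha : 0 < a) (j : ℕ) : Real.Gamma (a + j) = rf a j * Real.Gamma a := by
  induction j with
  | zero => simp
  | succ j ih =>
    have hne : a + (j:ℝ) ≠ 0 := by positivity
    rw [show a + ((j+1:ℕ):ℝ) = (a + (j:ℝ)) + 1 by push_cast; ring,
      Real.Gamma_add_one hne, ih, rf_succ]
    ring

lemma betaFn_ratio {a μ : ℝ} (ha : 0 < a) (hμ : 0 < μ) (j : ℕ) :
    BetaFn (a + (j:ℝ)) μ = (rf a j / rf (a+μ) j) * BetaFn a μ := by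
  have haμ : (0:ℝ) < a + μ := by linarith
  unfold BetaFn
  rw [show a + (j:ℝ) + μ = (a + μ) + (j:ℝ) by ring, Gamma_rf ha, Gamma_rf haμ]
  have g1 : Real.Gamma a > 0 := Real.Gamma_pos_of_pos ha
  have g2 : Real.Gamma μ > 0 := Real.Gamma_pos_of_pos hμ
  have g3 : Real.Gamma (a+μ) > 0 := Real.Gamma_pos_of_pos haμ
  have r1 : rf a j ≠ 0 := rf_ne_zero ha j
  have r2 : rf (a+μ) j ≠ 0 := rf_ne_zero haμ j
  field_simp


/-- second Beta-integral identity for normalized Jacobi polynomials. -/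
theorem stmt_10 (a b μ : ℝ) (ha : 0 < a) (hb : 0 < b) (hμ0 : 0 < μ) (hμb : μ < b)
    (n : ℕ) (x : ℝ) (hx : x ∈ Set.Icc (0 : ℝ) 1) :
    (∫ z in Set.Icc (0 : ℝ) 1,
        Rpoly a b n (x * z) * (z ^ (a - 1) * (1 - z) ^ (μ - 1) / BetaFn a μ)) =
      (zeta (a + μ) (b - μ) n / zeta a b n) * Rpoly (a + μ) (b - μ) n x := by
  have hB : BetaFn a μ ≠ 0 := (betaFn_pos ha hμ0).ne'
  have haμ : (0:ℝ) < a + μ := by linarith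
  have hbμ : (0:ℝ) < b - μ := by linarith
  have hab : (0:ℝ) < a + b := by linarith
  -- integrability of each monomial term
  have hint : ∀ j : ℕ, IntegrableOn (fun z : ℝ => z ^ (a + (j:ℝ) - 1) * (1-z) ^ (μ-1))
      (Set.Ioc (0:ℝ) 1) := by
    intro j
    exact betaIntegrableOn (a + (j:ℝ)) μ (by positivity) hμ0
  have hIj : ∀ j : ℕ, (∫ z in Set.Ioc (0:ℝ) 1, z ^ (a + (j:ℝ) - 1) * (1-z) ^ (μ-1))
      = (rf a j / rf (a+μ) j) * BetaFn a μ := by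
    intro j
    rw [betaEval (a + (j:ℝ)) μ (by positivity) hμ0, betaFn_ratio ha hμ0 j]
  -- LHS computation
  have hLHS : (∫ z in Set.Icc (0:ℝ) 1,
        Rpoly a b n (x*z) * (z^(a-1)*(1-z)^(μ-1)/BetaFn a μ))
      = ∑ j ∈ Finset.range (n+1),
          ((-1:ℝ)^n * (n.choose j : ℝ) * rf ((n:ℝ)+(a+b)-1) j * rf (a + (j:ℝ)) (n-j) / rf b n)
            * ((-x)^j * (rf a j / rf (a+μ) j)) := by
    rw [MeasureTheory.integral_Icc_eq_integral_Ioc]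
    have hpt : ∀ z ∈ Set.Ioc (0:ℝ) 1,
        Rpoly a b n (x*z) * (z^(a-1)*(1-z)^(μ-1)/BetaFn a μ)
        = ∑ k ∈ Finset.range (n+1), ∑ j ∈ Finset.range (k+1),
            ((-1:ℝ)^k * (n.choose k:ℝ) * (rf ((n:ℝ)+(a+b)-1) k / rf b k)
              * ((k.choose j:ℝ) * (-x)^j / BetaFn a μ))
              * (z ^ (a + (j:ℝ) - 1) * (1-z) ^ (μ-1)) := by
      intro z hz
      have hz0 : (0:ℝ) < z := hz.1
      rw [Rpoly, Finset.sum_mul]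
      apply Finset.sum_congr rfl
      intro k _
      have hbp : (1 - x*z)^k = ∑ j ∈ Finset.range (k+1), (-x)^j * z^(j:ℕ) * (k.choose j : ℝ) := by
        rw [show (1:ℝ) - x*z = (-x)*z + 1 by ring, add_pow]
        apply Finset.sum_congr rfl
        intro j _
        rw [mul_pow, one_pow]
        ring
      rw [hbp, Finset.mul_sum, Finset.sum_mul]
      apply Finset.sum_congr rfl
      intro j _
      have hzz : z ^ (a + (j:ℝ) - 1) = z ^ (a-1) * z ^ (j:ℕ) := by
        rw [← Real.rpow_natCast z j, ← Real.rpow_add hz0]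
        ring_nf
      rw [hzz]
      field_simp
    rw [setIntegral_congr_fun measurableSet_Ioc hpt]
    rw [MeasureTheory.integral_finset_sum _ (fun k _ =>
      MeasureTheory.integrable_finset_sum _ (fun j _ => ((hint j).const_mul _)))]
    have hinner : ∀ k ∈ Finset.range (n+1),
        (∫ z in Set.Ioc (0:ℝ) 1, ∑ j ∈ Finset.range (k+1),
            ((-1:ℝ)^k * (n.choose k:ℝ) * (rf ((n:ℝ)+(a+b)-1) k / rf b k)
              * ((k.choose j:ℝ) * (-x)^j / BetaFn a μ))
              * (z ^ (a + (j:ℝ) - 1) * (1-z) ^ (μ-1)))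
        = ∑ j ∈ Finset.range (k+1),
            ((-1:ℝ)^k * (n.choose k:ℝ) * ((k.choose j:ℝ)) * rf ((n:ℝ)+(a+b)-1) k / rf b k)
              * ((-x)^j * (rf a j / rf (a+μ) j)) := by
      intro k _
      rw [MeasureTheory.integral_finset_sum _ (fun j _ => ((hint j).const_mul _))]
      apply Finset.sum_congr rfl
      intro j _
      have cancelB : ∀ u v : ℝ, (u / BetaFn a μ) * (v * BetaFn a μ) = u * v := by
        intro u v
        field_simp
      rw [MeasureTheory.integral_const_mul, hIj j, ← mul_div_assoc, cancelB]
      ring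
    rw [Finset.sum_congr rfl hinner, sum_swap_tri]
    apply Finset.sum_congr rfl
    intro j hj
    have hjn : j ≤ n := by
      simp only [Finset.mem_range] at hj; omega
    have hpull : ∀ k ∈ Finset.Icc j n,
        ((-1:ℝ)^k * (n.choose k:ℝ) * ((k.choose j:ℝ)) * rf ((n:ℝ)+(a+b)-1) k / rf b k)
          * ((-x)^j * (rf a j / rf (a+μ) j))
        = ((-1:ℝ)^k * (n.choose k:ℝ) * (k.choose j:ℝ) * rf ((n:ℝ)+(a+b)-1) k / rf b k)
          * ((-x)^j * (rf a j / rf (a+μ) j)) := by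
      intro k _; rfl
    rw [Finset.sum_congr rfl hpull, ← Finset.sum_mul, keyS (a+b) b hb n j hjn,
      show a + b - b + (j:ℝ) = a + (j:ℝ) by ring]
  -- RHS computation
  have hRHS : (zeta (a+μ) (b-μ) n / zeta a b n) * Rpoly (a+μ) (b-μ) n x
      = ∑ j ∈ Finset.range (n+1),
          (zeta (a+μ) (b-μ) n / zeta a b n) *
          (((-1:ℝ)^n * (n.choose j : ℝ) * rf ((n:ℝ)+(a+b)-1) j * rf (a+μ+(j:ℝ)) (n-j) / rf (b-μ) n)
            * (-x)^j) := by
    rw [Rpoly, show a + μ + (b - μ) = a + b by ring, Finset.mul_sum]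
    have hexp : ∀ k ∈ Finset.range (n+1),
        (zeta (a+μ) (b-μ) n / zeta a b n) *
          ((-1:ℝ)^k * (n.choose k:ℝ) * (rf ((n:ℝ)+(a+b)-1) k / rf (b-μ) k) * (1-x)^k)
        = ∑ j ∈ Finset.range (k+1),
            (zeta (a+μ) (b-μ) n / zeta a b n) *
            (((-1:ℝ)^k * (n.choose k:ℝ) * (k.choose j:ℝ) * rf ((n:ℝ)+(a+b)-1) k / rf (b-μ) k)
              * (-x)^j) := by
      intro k _
      have hbp : (1 - x)^k = ∑ j ∈ Finset.range (k+1), (-x)^j * (k.choose j : ℝ) := by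
        rw [show (1:ℝ) - x = (-x) + 1 by ring, add_pow]
        apply Finset.sum_congr rfl
        intro j _
        rw [one_pow]
        ring
      rw [hbp, Finset.mul_sum, Finset.mul_sum]
      apply Finset.sum_congr rfl
      intro j _
      ring
    rw [Finset.sum_congr rfl hexp, sum_swap_tri]
    apply Finset.sum_congr rfl
    intro j hj
    have hjn : j ≤ n := by
      simp only [Finset.mem_range] at hj; omega
    have hpull : ∀ k ∈ Finset.Icc j n,
        (zeta (a+μ) (b-μ) n / zeta a b n) *
          (((-1:ℝ)^k * (n.choose k:ℝ) * (k.choose j:ℝ) * rf ((n:ℝ)+(a+b)-1) k / rf (b-μ) k)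
            * (-x)^j)
        = ((-1:ℝ)^k * (n.choose k:ℝ) * (k.choose j:ℝ) * rf ((n:ℝ)+(a+b)-1) k / rf (b-μ) k)
          * ((zeta (a+μ) (b-μ) n / zeta a b n) * (-x)^j) := by
      intro k _; ring
    rw [Finset.sum_congr rfl hpull, ← Finset.sum_mul, keyS (a+b) (b-μ) hbμ n j hjn,
      show a + b - (b-μ) + (j:ℝ) = a + μ + (j:ℝ) by ring]
    ring
  rw [hLHS, hRHS]
  -- termwise comparison
  apply Finset.sum_congr rfl
  intro j hj
  have hjn : j ≤ n := by
    simp only [Finset.mem_range] at hj; omega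
  have hzr := zeta_ratio a b μ ha hb hμ0 hμb n
  have hA : rf a n = rf a j * rf (a + (j:ℝ)) (n-j) := by
    have := rf_add a j (n-j)
    rwa [Nat.add_sub_cancel' hjn] at this
  have hA' : rf (a+μ) n = rf (a+μ) j * rf (a+μ+(j:ℝ)) (n-j) := by
    have := rf_add (a+μ) j (n-j)
    rwa [Nat.add_sub_cancel' hjn] at this
  rw [hzr, hA, hA']
  have r1 : rf b n ≠ 0 := rf_ne_zero hb n
  have r2 : rf (b-μ) n ≠ 0 := rf_ne_zero hbμ n
  have r3 : rf (a+μ) j ≠ 0 := rf_ne_zero haμ j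
  have r4 : rf (a+μ+(j:ℝ)) (n-j) ≠ 0 := rf_ne_zero (by positivity) (n-j)
  have r5 : rf a j ≠ 0 := rf_ne_zero ha j
  have r6 : rf (a+(j:ℝ)) (n-j) ≠ 0 := rf_ne_zero (by positivity) (n-j)
  field_simp
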